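/- For a magma Q the following are equivalent: (i) Q is a connected rack whose right multiplication group Rmlt(Q) is abelian; (ii) Q is a permutational magma Q(f) for some permutation f of Q such that the cyclic group generated by f acts transitively on Q. -/
import Mathlib


/-- For a magma `Q` the following are equivalent: (i) `Q` is a connected rack
(every right translation is a bijection, the operation is right self-distributive,
and the right multiplication group — the subgroup of the symmetric group on `Q`
generated by the permutations agreeing with right translations — acts transitively
on `Q`) whose right multiplication group is abelian; (ii) `Q` is a permutational
magma `Q(f)` for some permutation `f` such that the cyclic group generated by `f`
acts transitively on `Q`. -/
theorem connected_rack_abelian_rmlt_iff_permutational {Q : Type*} (mul : Q → Q → Q) :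
    ((∀ x : Q, Function.Bijective fun y => mul y x) ∧
      (∀ x y z : Q, mul (mul x y) z = mul (mul x z) (mul y z)) ∧
      (∀ a b : Q,
        ∃ g ∈ Subgroup.closure {σ : Equiv.Perm Q | ∃ x : Q, ∀ y : Q, σ y = mul y x},
          g a = b) ∧
      (∀ g ∈ Subgroup.closure {σ : Equiv.Perm Q | ∃ x : Q, ∀ y : Q, σ y = mul y x},
        ∀ h ∈ Subgroup.closure {σ : Equiv.Perm Q | ∃ x : Q, ∀ y : Q, σ y = mul y x},
          g * h = h * g)) ↔
      (∃ f : Equiv.Perm Q, (∀ x y : Q, mul x y = f x) ∧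
        ∀ a b : Q, ∃ n : ℤ, (f ^ n) a = b) := by
  set S : Set (Equiv.Perm Q) := {σ : Equiv.Perm Q | ∃ x : Q, ∀ y : Q, σ y = mul y x} with hSdef
  constructor
  · rintro ⟨hbij, hdist, htrans, hcomm⟩
    rcases isEmpty_or_nonempty Q with hQ | ⟨⟨a₀⟩⟩
    · exact ⟨1, fun x _ => (IsEmpty.false x).elim, fun a => (IsEmpty.false a).elim⟩
    -- right translations as permutations
    let R : Q → Equiv.Perm Q := fun x => Equiv.ofBijective _ (hbij x)
    have hRapp : ∀ x y : Q, R x y = mul y x := fun _ _ => rfl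
    have hRmem : ∀ x : Q, R x ∈ S := fun x => ⟨x, fun _ => rfl⟩
    have hRcl : ∀ x : Q, R x ∈ Subgroup.closure S :=
      fun x => Subgroup.subset_closure (hRmem x)
    -- Claim A : R (y*z) = R z * R y * (R z)⁻¹
    have hA : ∀ y z : Q, R (mul y z) = R z * R y * (R z)⁻¹ := by
      intro y z
      ext x
      obtain ⟨w, rfl⟩ := (hbij z).2 x
      have hinv : (R z)⁻¹ (mul w z) = w := by
        have := (R z).symm_apply_apply w
        simpa [hRapp] using this
      simp only [Equiv.Perm.mul_apply, hinv, hRapp]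
      exact (hdist w y z).symm
    -- Claim B : R (g y) = g * R y * g⁻¹ for g in the closure
    have hB : ∀ g ∈ Subgroup.closure S, ∀ y : Q, R (g y) = g * R y * g⁻¹ := by
      intro g hg
      induction hg using Subgroup.closure_induction with
      | mem σ hσ =>
        intro y
        obtain ⟨x, hx⟩ := hσ
        have hσR : σ = R x := Equiv.ext fun w => hx w
        subst hσR
        rw [hRapp]
        exact hA y x
      | one => intro y; simp
      | mul g h hg hh ihg ihh =>
        intro y
        have : (g * h) y = g (h y) := rfl
        rw [this, ihg, ihh]
        group
      | inv g hg ih =>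
        intro y
        have h1 := ih (g⁻¹ y)
        have h2 : g (g⁻¹ y) = y := by simp
        rw [h2] at h1
        rw [h1]
        group
    -- all right translations are equal
    have hRconst : ∀ x y : Q, R x = R y := by
      intro x y
      obtain ⟨g, hg, hgx⟩ := htrans x y
      have := hB g hg x
      rw [hgx] at this
      rw [this, hcomm g hg (R x) (hRcl x)]
      group
    refine ⟨R a₀, fun x y => ?_, fun a b => ?_⟩
    · have := hRconst y a₀
      calc mul x y = R y x := rfl
        _ = R a₀ x := by rw [this]
    · obtain ⟨g, hg, hgab⟩ := htrans a b
      have hle : Subgroup.closure S ≤ Subgroup.zpowers (R a₀) := by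
        rw [Subgroup.closure_le]
        intro σ hσ
        obtain ⟨x, hx⟩ := hσ
        have : σ = R a₀ := by
          rw [← hRconst x a₀]; exact Equiv.ext fun w => hx w
        rw [this]
        exact Subgroup.mem_zpowers _
      obtain ⟨n, hn⟩ := hle hg
      have hn' : R a₀ ^ n = g := hn
      exact ⟨n, by rw [hn', hgab]⟩
  · rintro ⟨f, hf, htrans⟩
    have hSf : ∀ σ ∈ S, σ = f := by
      rintro σ ⟨x, hx⟩
      exact Equiv.ext fun y => by rw [hx y, hf]
    refine ⟨fun x => ?_, fun x y z => ?_, fun a b => ?_, fun g hg h hh => ?_⟩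
    · have : (fun y => mul y x) = f := funext fun y => hf y x
      rw [this]; exact f.bijective
    · rw [hf (mul x y) z, hf (mul x z) (mul y z), hf x y, hf x z]
    · obtain ⟨n, hn⟩ := htrans a b
      have hfS : f ∈ S := ⟨a, fun y => (hf y a).symm⟩
      exact ⟨f ^ n, Subgroup.zpow_mem _ (Subgroup.subset_closure hfS) n, hn⟩
    · have hle : Subgroup.closure S ≤ Subgroup.zpowers f := by
        rw [Subgroup.closure_le]
        intro σ hσ
        rw [hSf σ hσ]
        exact Subgroup.mem_zpowers _
      obtain ⟨m, hm⟩ := hle hg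
      obtain ⟨n, hn⟩ := hle hh
      have hm' : f ^ m = g := hm
      have hn' : f ^ n = h := hn
      rw [← hm', ← hn', ← zpow_add, ← zpow_add, add_comm]
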